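/- If a convex polygon R with n boundary edges is tiled by finitely many convex polygonal tiles (a nondegenerate tiling whose tiles form the open 2-cells, whose maximal boundary segments form the open 1-cells, and whose vertices are the n corners of R), then the number of maximal segments exceeds the number of tiles by n-1; i.e., |W| = |B| - n + 1 where W is the set of tiles and B the set of maximal segments. -/

import Mathlib

open Set Filter Topology Bornology
attribute [local instance] Classical.propDecidable
noncomputable section EulerAux


/-- integer indicator -/
def indZ (S : Set ℝ) (x : ℝ) : ℤ := if x ∈ S then 1 else 0

/-- eventual value of the indicator just to the right of `x` -/
def rv (S : Set ℝ) (x : ℝ) : ℤ := if (∀ᶠ t in 𝓝[>] x, t ∈ S) then 1 else 0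

def dS (S : Set ℝ) (x : ℝ) : ℤ := indZ S x - rv S x

/-- combinatorial (compactly supported) Euler characteristic in dimension 1 -/
def chi1 (S : Set ℝ) : ℤ := ∑ᶠ x, dS S x

def Tame (S : Set ℝ) : Prop :=
  ∀ x : ℝ, (∀ᶠ t in 𝓝[>] x, t ∈ S) ∨ (∀ᶠ t in 𝓝[>] x, t ∉ S)

lemma indZ_of_mem {S : Set ℝ} {x : ℝ} (h : x ∈ S) : indZ S x = 1 := by rw [indZ, if_pos h]
lemma indZ_of_not_mem {S : Set ℝ} {x : ℝ} (h : x ∉ S) : indZ S x = 0 := by rw [indZ, if_neg h]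

lemma rv_eq_one {S : Set ℝ} {x : ℝ} (h : ∀ᶠ t in 𝓝[>] x, t ∈ S) : rv S x = 1 := by rw [rv, if_pos h]

lemma rv_eq_zero {S : Set ℝ} {x : ℝ} (h : ∀ᶠ t in 𝓝[>] x, t ∉ S) : rv S x = 0 := by
  rw [rv, if_neg]
  intro h'
  rcases (h.and h').exists with ⟨t, ht⟩
  exact ht.1 ht.2

lemma Tame.of_ordConnected {S : Set ℝ} (h : S.OrdConnected) : Tame S := by
  intro x
  by_cases h1 : ∀ᶠ t in 𝓝[>] x, t ∉ S
  · exact Or.inr h1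
  · left
    have hfreq : ∃ᶠ t in 𝓝[>] x, t ∈ S := by
      rw [Filter.not_eventually] at h1
      simpa using h1
    obtain ⟨z, hzS, hzx⟩ : ∃ z, z ∈ S ∧ x < z := by
      rcases (hfreq.and_eventually self_mem_nhdsWithin).exists with ⟨z, hz⟩
      exact ⟨z, hz.1, hz.2⟩
    filter_upwards [Ioo_mem_nhdsGT_of_mem ⟨le_refl x, hzx⟩] with t ht
    obtain ⟨s, hsS, hs⟩ : ∃ s, s ∈ S ∧ s ∈ Ioo x t := by
      rcases (hfreq.and_eventually (Ioo_mem_nhdsGT_of_mem ⟨le_refl x, ht.1⟩)).exists with ⟨s, hs⟩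
      exact ⟨s, hs.1, hs.2⟩
    exact h.out hsS hzS ⟨hs.2.le, ht.2.le⟩

lemma dS_support_subset {S : Set ℝ} (hoc : S.OrdConnected) (hb : IsBounded S) :
    Function.support (dS S) ⊆ {sInf S, sSup S} := by
  intro x hx
  by_contra hmem
  simp only [mem_insert_iff, mem_singleton_iff, not_or] at hmem
  apply hx
  rcases S.eq_empty_or_nonempty with rfl | hne
  · have h0 : rv ∅ x = 0 := rv_eq_zero (by filter_upwards with t; exact notMem_empty t)
    simp [dS, indZ, h0]
  · have hba := hb.bddAbove
    have hbb := hb.bddBelow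
    by_cases hxS : x ∈ S
    · have hlt : x < sSup S := lt_of_le_of_ne (le_csSup hba hxS) hmem.2
      obtain ⟨z, hzS, hz⟩ := exists_lt_of_lt_csSup hne hlt
      have hev : ∀ᶠ t in 𝓝[>] x, t ∈ S := by
        filter_upwards [Ioo_mem_nhdsGT_of_mem ⟨le_refl x, hz⟩] with t ht
        exact hoc.out hxS hzS ⟨ht.1.le, ht.2.le⟩
      simp [dS, indZ_of_mem hxS, rv_eq_one hev]
    · have hrv : ∀ᶠ t in 𝓝[>] x, t ∉ S := by
        rcases lt_or_ge x (sInf S) with hlt | hge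
        · filter_upwards [Ioo_mem_nhdsGT_of_mem ⟨le_refl x, hlt⟩] with t ht htS
          exact absurd (csInf_le hbb htS) (not_le.mpr ht.2)
        · have hxsup : sSup S ≤ x := by
            by_contra hc
            push_neg at hc
            have hxinf : sInf S < x := lt_of_le_of_ne hge (Ne.symm hmem.1)
            obtain ⟨p, hpS, hp⟩ := exists_lt_of_csInf_lt hne hxinf
            obtain ⟨q, hqS, hq⟩ := exists_lt_of_lt_csSup hne hc
            exact hxS (hoc.out hpS hqS ⟨hp.le, hq.le⟩)
          filter_upwards [self_mem_nhdsWithin] with t ht htS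
          exact absurd (le_csSup hba htS) (not_le.mpr (lt_of_le_of_lt hxsup ht))
      simp [dS, indZ_of_not_mem hxS, rv_eq_zero hrv]

lemma dS_empty (x : ℝ) : dS ∅ x = 0 := by
  have h0 : rv ∅ x = 0 := rv_eq_zero (by filter_upwards with t; exact notMem_empty t)
  simp [dS, indZ, h0]

lemma chi1_empty : chi1 (∅ : Set ℝ) = 0 := by
  rw [chi1]
  exact finsum_eq_zero_of_forall_eq_zero dS_empty

lemma dS_Icc {a b : ℝ} (hab : a ≤ b) (x : ℝ) :
    dS (Icc a b) x = if x = b then 1 else 0 := by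
  by_cases hxb : x = b
  · subst hxb
    have hrv : ∀ᶠ t in 𝓝[>] x, t ∉ Icc a x := by
      filter_upwards [self_mem_nhdsWithin] with t ht htS
      exact absurd (mem_Icc.mp htS).2 (not_le.mpr ht)
    rw [dS, indZ_of_mem (mem_Icc.mpr ⟨hab, le_refl x⟩), rv_eq_zero hrv, if_pos rfl]
    norm_num
  · rw [if_neg hxb]
    rcases lt_or_ge x a with hxa | hax
    · have hrv : ∀ᶠ t in 𝓝[>] x, t ∉ Icc a b := by
        filter_upwards [Ioo_mem_nhdsGT_of_mem ⟨le_refl x, hxa⟩] with t ht htS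
        exact absurd (mem_Icc.mp htS).1 (not_le.mpr ht.2)
      rw [dS, indZ_of_not_mem (fun hm => absurd (mem_Icc.mp hm).1 (not_le.mpr hxa)), rv_eq_zero hrv]
      norm_num
    · rcases lt_or_ge x b with hxb' | hbx
      · have hrv : ∀ᶠ t in 𝓝[>] x, t ∈ Icc a b := by
          filter_upwards [Ioo_mem_nhdsGT_of_mem ⟨le_refl x, hxb'⟩] with t ht
          exact mem_Icc.mpr ⟨hax.trans ht.1.le, ht.2.le⟩
        rw [dS, indZ_of_mem (mem_Icc.mpr ⟨hax, hxb'.le⟩), rv_eq_one hrv]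
        ring
      · have hbx' : b < x := lt_of_le_of_ne hbx (Ne.symm hxb)
        have hrv : ∀ᶠ t in 𝓝[>] x, t ∉ Icc a b := by
          filter_upwards [self_mem_nhdsWithin] with t ht htS
          exact absurd (mem_Icc.mp htS).2 (not_le.mpr (hbx'.trans ht))
        rw [dS, indZ_of_not_mem (fun hm => absurd (mem_Icc.mp hm).2 (not_le.mpr hbx')), rv_eq_zero hrv]
        norm_num

lemma dS_Ioo {a b : ℝ} (hab : a < b) (x : ℝ) :
    dS (Ioo a b) x = if x = a then -1 else 0 := by
  by_cases hxa : x = a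
  · subst hxa
    have hrv : ∀ᶠ t in 𝓝[>] x, t ∈ Ioo x b := by
      filter_upwards [Ioo_mem_nhdsGT_of_mem ⟨le_refl x, hab⟩] with t ht
      exact ht
    rw [dS, indZ_of_not_mem (fun hm => absurd (mem_Ioo.mp hm).1 (lt_irrefl x)), rv_eq_one hrv, if_pos rfl]
    norm_num
  · rw [if_neg hxa]
    rcases lt_or_ge x a with hxa' | hax
    · have hrv : ∀ᶠ t in 𝓝[>] x, t ∉ Ioo a b := by
        filter_upwards [Ioo_mem_nhdsGT_of_mem ⟨le_refl x, hxa'⟩] with t ht htS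
        exact absurd (mem_Ioo.mp htS).1 (not_lt.mpr ht.2.le)
      rw [dS, indZ_of_not_mem (fun hm => absurd (mem_Ioo.mp hm).1 (not_lt.mpr hxa'.le)), rv_eq_zero hrv]
      norm_num
    · have hax' : a < x := lt_of_le_of_ne hax (Ne.symm hxa)
      rcases lt_or_ge x b with hxb | hbx
      · have hrv : ∀ᶠ t in 𝓝[>] x, t ∈ Ioo a b := by
          filter_upwards [Ioo_mem_nhdsGT_of_mem ⟨le_refl x, hxb⟩] with t ht
          exact mem_Ioo.mpr ⟨hax'.trans ht.1, ht.2⟩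
        rw [dS, indZ_of_mem (mem_Ioo.mpr ⟨hax', hxb⟩), rv_eq_one hrv]
        ring
      · have hrv : ∀ᶠ t in 𝓝[>] x, t ∉ Ioo a b := by
          filter_upwards [self_mem_nhdsWithin] with t ht htS
          exact absurd (mem_Ioo.mp htS).2 (not_lt.mpr (hbx.trans ht.le))
        rw [dS, indZ_of_not_mem (fun hm => absurd (mem_Ioo.mp hm).2 (not_lt.mpr hbx)), rv_eq_zero hrv]
        norm_num

lemma chi1_Icc {a b : ℝ} (hab : a ≤ b) : chi1 (Icc a b) = 1 := by
  rw [chi1, finsum_eq_single _ b (fun x hx => by rw [dS_Icc hab x, if_neg hx]),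
    dS_Icc hab b, if_pos rfl]

lemma chi1_singleton (a : ℝ) : chi1 {a} = 1 := by
  rw [← Icc_self]
  exact chi1_Icc le_rfl

lemma chi1_Ioo {a b : ℝ} (hab : a < b) : chi1 (Ioo a b) = -1 := by
  rw [chi1, finsum_eq_single _ a (fun x hx => by rw [dS_Ioo hab x, if_neg hx]),
    dS_Ioo hab a, if_pos rfl]



lemma chi1_additive {ι : Type} [Fintype ι] (S : ι → Set ℝ) (c : ι → ℤ) (S₀ : Set ℝ)
    (h1 : ∀ x, indZ S₀ x = ∑ i, c i * indZ (S i) x)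
    (h2 : ∀ i, Tame (S i))
    (h3 : ∀ i, (Function.support (dS (S i))).Finite) :
    chi1 S₀ = ∑ i, c i * chi1 (S i) := by
  have hrv : ∀ x, rv S₀ x = ∑ i, c i * rv (S i) x := by
    intro x
    have hev : ∀ᶠ t in 𝓝[>] x, ∀ i, indZ (S i) t = rv (S i) x := by
      rw [eventually_all]
      intro i
      rcases h2 i x with h | h
      · filter_upwards [h] with t ht
        rw [indZ_of_mem ht, rv_eq_one h]
      · filter_upwards [h] with t ht
        rw [indZ_of_not_mem ht, rv_eq_zero h]
    have hev0 : ∀ᶠ t in 𝓝[>] x, indZ S₀ t = ∑ i, c i * rv (S i) x := by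
      filter_upwards [hev] with t ht
      rw [h1 t]
      exact Finset.sum_congr rfl fun i _ => by rw [ht i]
    by_cases h0 : ∀ᶠ t in 𝓝[>] x, t ∈ S₀
    · rw [rv_eq_one h0]
      rcases (h0.and hev0).exists with ⟨t, ht1, ht2⟩
      rw [← ht2, indZ_of_mem ht1]
    · rw [rv, if_neg h0]
      have hfr : ∃ᶠ t in 𝓝[>] x, t ∉ S₀ := by
        rwa [Filter.not_eventually] at h0
      rcases (hfr.and_eventually hev0).exists with ⟨t, ht1, ht2⟩
      rw [← ht2, indZ_of_not_mem ht1]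
  have hd : ∀ x, dS S₀ x = ∑ i, c i * dS (S i) x := by
    intro x
    rw [dS, h1 x, hrv x, ← Finset.sum_sub_distrib]
    exact Finset.sum_congr rfl fun i _ => by rw [dS]; ring
  rw [chi1]
  calc ∑ᶠ x, dS S₀ x = ∑ᶠ x, ∑ i, c i * dS (S i) x := finsum_congr hd
    _ = ∑ i, ∑ᶠ x, c i * dS (S i) x := by
        refine finsum_sum_comm _ _ fun i _ => (h3 i).subset fun x hx => ?_
        simp only [Function.mem_support] at hx ⊢
        intro h0
        exact hx (by rw [h0, mul_zero])
    _ = ∑ i, c i * chi1 (S i) := by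
        refine Finset.sum_congr rfl fun i _ => ?_
        rw [chi1, mul_finsum]

lemma convex_compact_chi1 {S : Set ℝ} (hc : Convex ℝ S) (hk : IsCompact S) (hne : S.Nonempty) :
    chi1 S = 1 := by
  have h1 : S = Icc (sInf S) (sSup S) := by
    apply Subset.antisymm
    · intro s hs
      exact mem_Icc.mpr ⟨csInf_le hk.isBounded.bddBelow hs, le_csSup hk.isBounded.bddAbove hs⟩
    · exact hc.ordConnected.out (hk.sInf_mem hne) (hk.sSup_mem hne)
  obtain ⟨s, hs⟩ := hne
  rw [h1]
  exact chi1_Icc ((csInf_le hk.isBounded.bddBelow hs).trans (le_csSup hk.isBounded.bddAbove hs))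

lemma convex_open_chi1 {S : Set ℝ} (hc : Convex ℝ S) (ho : IsOpen S) (hb : IsBounded S)
    (hne : S.Nonempty) : chi1 S = -1 := by
  have hlt : ∀ s ∈ S, sInf S < s ∧ s < sSup S := by
    intro s hs
    obtain ⟨ε, hε, hball⟩ := Metric.isOpen_iff.mp ho s hs
    have hmem1 : s - ε/2 ∈ S := by
      apply hball
      rw [Metric.mem_ball, Real.dist_eq, show s - ε/2 - s = -(ε/2) by ring, abs_neg,
        abs_of_pos (by linarith)]
      linarith
    have hmem2 : s + ε/2 ∈ S := by
      apply hball
      rw [Metric.mem_ball, Real.dist_eq, show s + ε/2 - s = ε/2 by ring,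
        abs_of_pos (by linarith)]
      linarith
    constructor
    · exact lt_of_le_of_lt (csInf_le hb.bddBelow hmem1) (by linarith)
    · exact lt_of_lt_of_le (by linarith : s < s + ε/2) (le_csSup hb.bddAbove hmem2)
  have heq : S = Ioo (sInf S) (sSup S) := by
    apply Subset.antisymm
    · intro s hs
      exact mem_Ioo.mpr (hlt s hs)
    · intro t ht
      obtain ⟨p, hpS, hp⟩ := exists_lt_of_csInf_lt hne (mem_Ioo.mp ht).1
      obtain ⟨q, hqS, hq⟩ := exists_lt_of_lt_csSup hne (mem_Ioo.mp ht).2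
      exact hc.ordConnected.out hpS hqS (mem_Icc.mpr ⟨hp.le, hq.le⟩)
  obtain ⟨s, hs⟩ := hne
  rw [heq]
  exact chi1_Ioo ((hlt s hs).1.trans (hlt s hs).2)

/-- horizontal slice of a planar set -/
def sl (A : Set (ℝ × ℝ)) (y : ℝ) : Set ℝ := {x | (x, y) ∈ A}

lemma sl_convex {A : Set (ℝ × ℝ)} (h : Convex ℝ A) (y : ℝ) : Convex ℝ (sl A y) := by
  intro x1 h1 x2 h2 a b ha hb hab
  have hm := h h1 h2 ha hb hab
  have key : a • ((x1, y) : ℝ × ℝ) + b • ((x2, y) : ℝ × ℝ) = (a • x1 + b • x2, y) := by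
    have : a * y + b * y = y := by rw [← add_mul, hab, one_mul]
    simp [Prod.ext_iff, this]
  rw [key] at hm
  exact hm

lemma sl_isOpen {A : Set (ℝ × ℝ)} (h : IsOpen A) (y : ℝ) : IsOpen (sl A y) :=
  h.preimage (continuous_id.prodMk continuous_const)

lemma sl_isClosed {A : Set (ℝ × ℝ)} (h : IsClosed A) (y : ℝ) : IsClosed (sl A y) :=
  h.preimage (continuous_id.prodMk continuous_const)

lemma sl_bounded {A : Set (ℝ × ℝ)} (h : IsBounded A) (y : ℝ) : IsBounded (sl A y) := by
  obtain ⟨r, hr⟩ := h.subset_closedBall (0 : ℝ × ℝ)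
  apply (Metric.isBounded_closedBall (x := (0 : ℝ)) (r := r)).subset
  intro x hx
  have h2 := hr hx
  rw [Metric.mem_closedBall] at h2 ⊢
  rw [Prod.dist_eq] at h2
  exact le_trans (le_max_left _ _) h2

lemma snd_bounded {A : Set (ℝ × ℝ)} (h : IsBounded A) : IsBounded (Prod.snd '' A) := by
  obtain ⟨r, hr⟩ := h.subset_closedBall (0 : ℝ × ℝ)
  apply (Metric.isBounded_closedBall (x := (0 : ℝ)) (r := r)).subset
  rintro y ⟨z, hz, rfl⟩
  have h2 := hr hz
  rw [Metric.mem_closedBall] at h2 ⊢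
  rw [Prod.dist_eq] at h2
  exact le_trans (le_max_right _ _) h2

lemma sl_nonempty_iff {A : Set (ℝ × ℝ)} {y : ℝ} :
    (sl A y).Nonempty ↔ y ∈ Prod.snd '' A := by
  constructor
  · rintro ⟨x, hx⟩
    exact ⟨(x, y), hx, rfl⟩
  · rintro ⟨z, hz, rfl⟩
    exact ⟨z.1, by simpa [sl] using hz⟩

lemma sl_empty_of_not_mem {A : Set (ℝ × ℝ)} {y : ℝ} (h : y ∉ Prod.snd '' A) :
    sl A y = ∅ := by
  rw [eq_empty_iff_forall_notMem]
  intro x hx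
  exact h ⟨(x, y), hx, rfl⟩

lemma tile_slice {T : Set (ℝ × ℝ)} (hconv : Convex ℝ T) (hopen : IsOpen T) (hbd : IsBounded T)
    (y : ℝ) : chi1 (sl T y) = -1 * indZ (Prod.snd '' T) y := by
  by_cases hy : y ∈ Prod.snd '' T
  · rw [indZ_of_mem hy,
      convex_open_chi1 (sl_convex hconv y) (sl_isOpen hopen y) (sl_bounded hbd y)
        (sl_nonempty_iff.mpr hy)]
    ring
  · rw [indZ_of_not_mem hy, sl_empty_of_not_mem hy, chi1_empty]
    ring

lemma segment_diff_endpoints {p q : ℝ × ℝ} (h : p ≠ q) :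
    segment ℝ p q \ {p, q} = openSegment ℝ p q := by
  rw [← insert_endpoints_openSegment]
  ext z
  simp only [mem_diff, mem_insert_iff, mem_singleton_iff, not_or]
  constructor
  · rintro ⟨hz, h1, h2⟩
    rcases hz with rfl | rfl | hz
    · exact absurd rfl h1
    · exact absurd rfl h2
    · exact hz
  · intro hz
    refine ⟨Or.inr (Or.inr hz), ?_, ?_⟩
    · rintro rfl
      exact h (left_mem_openSegment_iff.mp hz)
    · rintro rfl
      exact h (right_mem_openSegment_iff.mp hz)

lemma sl_openSegment_horiz {p q : ℝ × ℝ} (hy : p.2 = q.2) (y : ℝ) :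
    sl (openSegment ℝ p q) y = if y = p.2 then openSegment ℝ p.1 q.1 else ∅ := by
  ext x
  by_cases h : y = p.2
  · subst h
    rw [if_pos rfl]
    simp only [sl, mem_setOf_eq, openSegment, Prod.ext_iff]
    constructor
    · rintro ⟨a, b, ha, hb, hab, heq⟩
      refine ⟨a, b, ha, hb, hab, ?_⟩
      simpa using heq.1
    · rintro ⟨a, b, ha, hb, hab, heq⟩
      refine ⟨a, b, ha, hb, hab, ?_⟩
      constructor
      · simpa using heq
      · show (a • p + b • q).2 = p.2
        simp only [Prod.snd_add, Prod.smul_snd, smul_eq_mul]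
        rw [← hy, ← add_mul, hab, one_mul]
  · rw [if_neg h]
    simp only [mem_empty_iff_false, iff_false]
    rintro ⟨a, b, ha, hb, hab, heq⟩
    apply h
    have h2 := congrArg Prod.snd heq
    simp only [Prod.snd_add, Prod.smul_snd, smul_eq_mul] at h2
    rw [← h2, ← hy, ← add_mul, hab, one_mul]

lemma sl_openSegment_slant {p q : ℝ × ℝ} (h : p.2 < q.2) (y : ℝ) :
    chi1 (sl (openSegment ℝ p q) y) = indZ (Ioo p.2 q.2) y := by
  have hd : q.2 - p.2 > 0 := sub_pos.mpr h
  by_cases hy : y ∈ Ioo p.2 q.2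
  · set t : ℝ := (y - p.2) / (q.2 - p.2) with hdef
    have hkey : t * (q.2 - p.2) = y - p.2 := div_mul_cancel₀ _ (ne_of_gt hd)
    have heqset : sl (openSegment ℝ p q) y = {(1 - t) * p.1 + t * q.1} := by
      ext x
      simp only [sl, mem_setOf_eq, openSegment, mem_singleton_iff, Prod.ext_iff]
      constructor
      · rintro ⟨a, b, ha, hb, hab, heq⟩
        have h1 : a * p.1 + b * q.1 = x := by simpa using heq.1
        have h2 : a * p.2 + b * q.2 = y := by simpa using heq.2
        have hat : a = 1 - b := by linarith
        have hbt : b = t := by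
          rw [hdef, eq_div_iff (ne_of_gt hd)]
          rw [hat] at h2
          nlinarith [h2]
        rw [← h1, hat, hbt]
      · intro hx
        refine ⟨1 - t, t, ?_, ?_, by ring, ?_⟩
        · rw [sub_pos, hdef, div_lt_one hd]
          linarith [(mem_Ioo.mp hy).2]
        · exact div_pos (sub_pos.mpr (mem_Ioo.mp hy).1) hd
        · refine ⟨?_, ?_⟩
          · simp only [Prod.fst_add, Prod.smul_fst, smul_eq_mul]
            rw [← hx]
          · simp only [Prod.snd_add, Prod.smul_snd, smul_eq_mul]
            nlinarith [hkey]
    rw [heqset, chi1_singleton, indZ_of_mem hy]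
  · have heqset : sl (openSegment ℝ p q) y = ∅ := by
      rw [eq_empty_iff_forall_notMem]
      rintro x ⟨a, b, ha, hb, hab, heq⟩
      have h2 : a * p.2 + b * q.2 = y := by
        have := congrArg Prod.snd heq
        simpa using this
      have e1 : y - p.2 = b * (q.2 - p.2) := by linear_combination -h2 + p.2 * hab
      have e2 : q.2 - y = a * (q.2 - p.2) := by linear_combination h2 - q.2 * hab
      apply hy
      rw [mem_Ioo]
      constructor
      · nlinarith [mul_pos hb hd]
      · nlinarith [mul_pos ha hd]
    rw [heqset, chi1_empty, indZ_of_not_mem hy]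

lemma seg_piece_slice {p q : ℝ × ℝ} (hpq : p ≠ q) (y : ℝ) :
    chi1 (sl (segment ℝ p q \ {p, q}) y) =
      (if p.2 = q.2 then (-1 : ℤ) else 1) *
        indZ (if p.2 = q.2 then Icc p.2 p.2 else Ioo (min p.2 q.2) (max p.2 q.2)) y := by
  rw [segment_diff_endpoints hpq]
  by_cases h2 : p.2 = q.2
  · rw [if_pos h2, if_pos h2, sl_openSegment_horiz h2 y]
    by_cases hy : y = p.2
    · rw [if_pos hy]
      have h1 : p.1 ≠ q.1 := fun h1 => hpq (Prod.ext h1 h2)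
      rw [openSegment_eq_Ioo' h1, chi1_Ioo (min_lt_max.mpr h1),
        indZ_of_mem (mem_Icc.mpr ⟨le_of_eq hy.symm, le_of_eq hy⟩)]
      ring
    · rw [if_neg hy, chi1_empty,
        indZ_of_not_mem (fun hm => hy (le_antisymm (mem_Icc.mp hm).2 (mem_Icc.mp hm).1))]
      ring
  · rw [if_neg h2, if_neg h2, one_mul]
    rcases lt_or_gt_of_ne (fun h => h2 h : p.2 ≠ q.2) with h | h
    · rw [sl_openSegment_slant h, min_eq_left h.le, max_eq_right h.le]
    · rw [openSegment_symm, sl_openSegment_slant h, min_eq_right h.le, max_eq_left h.le]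

lemma corner_slice (v : ℝ × ℝ) (y : ℝ) :
    chi1 (sl ({v} : Set (ℝ × ℝ)) y) = indZ (Icc v.2 v.2) y := by
  by_cases hy : y = v.2
  · have hs : sl ({v} : Set (ℝ × ℝ)) y = {v.1} := by
      ext x
      simp [sl, Prod.ext_iff, hy]
    rw [hs, chi1_singleton, indZ_of_mem (mem_Icc.mpr ⟨hy.ge, hy.le⟩)]
  · have hs : sl ({v} : Set (ℝ × ℝ)) y = ∅ := by
      ext x
      simp [sl, Prod.ext_iff, hy]
    rw [hs, chi1_empty,
      indZ_of_not_mem (fun hm => hy (le_antisymm (mem_Icc.mp hm).2 (mem_Icc.mp hm).1))]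

lemma euler_sum {ι : Type} [Fintype ι] (R : Set (ℝ × ℝ))
    (hRconv : Convex ℝ R) (hRcomp : IsCompact R) (hRne : R.Nonempty)
    (piece : ι → Set (ℝ × ℝ))
    (hconv : ∀ i, Convex ℝ (piece i))
    (hsub : ∀ i, piece i ⊆ R)
    (hdisj : ∀ i j, i ≠ j → ∀ z, z ∈ piece i → z ∈ piece j → False)
    (hcov : ∀ z ∈ R, ∃ i, z ∈ piece i)
    (c : ι → ℤ) (J : ι → Set ℝ)
    (hJconv : ∀ i, Convex ℝ (J i)) (hJbdd : ∀ i, IsBounded (J i))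
    (hpiece : ∀ i y, chi1 (sl (piece i) y) = c i * indZ (J i) y) :
    (1 : ℤ) = ∑ i, c i * chi1 (J i) := by
  classical
  have hRbd := hRcomp.isBounded
  have lvl1 : ∀ y, chi1 (sl R y) = ∑ i, c i * indZ (J i) y := by
    intro y
    have hmain := chi1_additive (fun i => sl (piece i) y) (fun _ => 1) (sl R y)
      (by
        intro x
        by_cases hx : x ∈ sl R y
        · obtain ⟨i₀, hi₀⟩ := hcov (x, y) hx
          rw [indZ_of_mem hx, Finset.sum_eq_single i₀]
          · rw [one_mul, indZ_of_mem hi₀]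
          · intro j _ hj
            rw [one_mul, indZ_of_not_mem (fun hmem => hdisj j i₀ hj (x, y) hmem hi₀)]
          · intro hmem
            exact absurd (Finset.mem_univ i₀) hmem
        · rw [indZ_of_not_mem hx, Finset.sum_eq_zero]
          intro j _
          rw [one_mul, indZ_of_not_mem (fun hmem => hx (hsub j hmem))])
      (fun i => Tame.of_ordConnected (sl_convex (hconv i) y).ordConnected)
      (fun i =>
        (Set.finite_singleton _ |>.insert _).subset
          (dS_support_subset (sl_convex (hconv i) y).ordConnected
            (sl_bounded (hRbd.subset (hsub i)) y)))
    rw [hmain]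
    exact Finset.sum_congr rfl fun i _ => by rw [one_mul, hpiece i y]
  have hproj : chi1 (Prod.snd '' R) = 1 :=
    convex_compact_chi1 (hRconv.linear_image (LinearMap.snd ℝ ℝ ℝ))
      (hRcomp.image continuous_snd) (hRne.image _)
  have lvl2 := chi1_additive J c (Prod.snd '' R)
    (by
      intro y
      rw [← lvl1 y]
      by_cases hy : y ∈ Prod.snd '' R
      · rw [indZ_of_mem hy,
          convex_compact_chi1 (sl_convex hRconv y)
            (Metric.isCompact_of_isClosed_isBounded (sl_isClosed hRcomp.isClosed y)
              (sl_bounded hRbd y))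
            (sl_nonempty_iff.mpr hy)]
      · rw [indZ_of_not_mem hy, sl_empty_of_not_mem hy, chi1_empty])
    (fun i => Tame.of_ordConnected (hJconv i).ordConnected)
    (fun i =>
      (Set.finite_singleton _ |>.insert _).subset
        (dS_support_subset (hJconv i).ordConnected (hJbdd i)))
  rw [← lvl2, hproj]

end EulerAux

open Set Bornology in
/-- If a convex polygon `R` with `n` boundary edges (equivalently `n` corners)
is tiled nondegenerately by finitely many convex polygonal tiles, where the open 2-cells
are the tile interiors, the open 1-cells are the (open) maximal segments of the union of
tile boundaries, and the 0-cells are exactly the `n` corners of `R`, then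
`|W| = |B| - n + 1`, where `W` indexes the tiles and `B` the maximal segments. -/
theorem number_of_segments_exceeds_tiles
    {W B : Type} [Fintype W] [Fintype B]
    (n : ℕ) (hn : 3 ≤ n)
    (corner : Fin n → ℝ × ℝ) (hcorner : Function.Injective corner)
    (R : Set (ℝ × ℝ))
    (hRhull : R = convexHull ℝ (Set.range corner))
    (hRint : (interior R).Nonempty)
    (tile : W → Set (ℝ × ℝ))
    (htconv : ∀ w, Convex ℝ (tile w))
    (htcomp : ∀ w, IsCompact (tile w))
    (htint : ∀ w, (interior (tile w)).Nonempty)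
    (segEnd₁ segEnd₂ : B → ℝ × ℝ)
    (hsegnd : ∀ b, segEnd₁ b ≠ segEnd₂ b)
    -- the open cells of the subdivision partition R:
    (hcover : R = (⋃ w, interior (tile w)) ∪
        (⋃ b, segment ℝ (segEnd₁ b) (segEnd₂ b) \ {segEnd₁ b, segEnd₂ b}) ∪
        Set.range corner)
    (hdisjWW : ∀ w w', w ≠ w' → interior (tile w) ∩ interior (tile w') = ∅)
    (hdisjBB : ∀ b b', b ≠ b' →
        (segment ℝ (segEnd₁ b) (segEnd₂ b) \ {segEnd₁ b, segEnd₂ b}) ∩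
        (segment ℝ (segEnd₁ b') (segEnd₂ b') \ {segEnd₁ b', segEnd₂ b'}) = ∅)
    (hdisjWB : ∀ w b, interior (tile w) ∩
        (segment ℝ (segEnd₁ b) (segEnd₂ b) \ {segEnd₁ b, segEnd₂ b}) = ∅)
    (hdisjWV : ∀ w, interior (tile w) ∩ Set.range corner = ∅)
    (hdisjBV : ∀ b, (segment ℝ (segEnd₁ b) (segEnd₂ b) \ {segEnd₁ b, segEnd₂ b}) ∩
        Set.range corner = ∅)
    -- the tile boundaries are covered by the (closed) segments:
    (hbdry : (⋃ w, frontier (tile w)) = ⋃ b, segment ℝ (segEnd₁ b) (segEnd₂ b)) :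
    (Fintype.card W : ℤ) = (Fintype.card B : ℤ) - n + 1 := by
  classical
  have hRconv : Convex ℝ R := hRhull ▸ convex_convexHull ℝ _
  have hRcomp : IsCompact R := hRhull ▸ (Set.finite_range corner).isCompact_convexHull ℝ
  have hRne : R.Nonempty := hRint.mono interior_subset
  have hRbd := hRcomp.isBounded
  set piece : W ⊕ B ⊕ Fin n → Set (ℝ × ℝ) :=
    Sum.elim (fun w => interior (tile w))
      (Sum.elim (fun b => segment ℝ (segEnd₁ b) (segEnd₂ b) \ {segEnd₁ b, segEnd₂ b})
        (fun k => {corner k})) with hpiece_def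
  set c : W ⊕ B ⊕ Fin n → ℤ :=
    Sum.elim (fun _ => -1)
      (Sum.elim (fun b => if (segEnd₁ b).2 = (segEnd₂ b).2 then -1 else 1) (fun _ => 1))
    with hc_def
  set J : W ⊕ B ⊕ Fin n → Set ℝ :=
    Sum.elim (fun w => Prod.snd '' interior (tile w))
      (Sum.elim (fun b => if (segEnd₁ b).2 = (segEnd₂ b).2
          then Icc (segEnd₁ b).2 (segEnd₁ b).2
          else Ioo (min (segEnd₁ b).2 (segEnd₂ b).2) (max (segEnd₁ b).2 (segEnd₂ b).2))
        (fun k => Icc (corner k).2 (corner k).2)) with hJ_def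
  have hsub : ∀ i, piece i ⊆ R := by
    rintro (w | b | k)
    · rw [hcover]
      exact ((subset_iUnion (fun w => interior (tile w)) w).trans
        subset_union_left).trans subset_union_left
    · rw [hcover]
      exact ((subset_iUnion
        (fun b => segment ℝ (segEnd₁ b) (segEnd₂ b) \ {segEnd₁ b, segEnd₂ b}) b).trans
        subset_union_right).trans subset_union_left
    · rw [hcover]
      exact (singleton_subset_iff.mpr (mem_range_self k)).trans subset_union_right
  have hdisj : ∀ i j, i ≠ j → ∀ z, z ∈ piece i → z ∈ piece j → False := by
    rintro (w | b | k) (w' | b' | k') hij z hz1 hz2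
    · have hww : w ≠ w' := fun h => hij (by rw [h])
      exact eq_empty_iff_forall_notMem.mp (hdisjWW w w' hww) z ⟨hz1, hz2⟩
    · exact eq_empty_iff_forall_notMem.mp (hdisjWB w b') z ⟨hz1, hz2⟩
    · exact eq_empty_iff_forall_notMem.mp (hdisjWV w) z ⟨hz1, hz2 ▸ mem_range_self k'⟩
    · exact eq_empty_iff_forall_notMem.mp (hdisjWB w' b) z ⟨hz2, hz1⟩
    · have hbb : b ≠ b' := fun h => hij (by rw [h])
      exact eq_empty_iff_forall_notMem.mp (hdisjBB b b' hbb) z ⟨hz1, hz2⟩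
    · exact eq_empty_iff_forall_notMem.mp (hdisjBV b) z ⟨hz1, hz2 ▸ mem_range_self k'⟩
    · exact eq_empty_iff_forall_notMem.mp (hdisjWV w') z ⟨hz2, hz1 ▸ mem_range_self k⟩
    · exact eq_empty_iff_forall_notMem.mp (hdisjBV b') z ⟨hz2, hz1 ▸ mem_range_self k⟩
    · have hkk : k ≠ k' := fun h => hij (by rw [h])
      exact hkk (hcorner (by rw [← hz1, ← hz2]))
  have hcov : ∀ z ∈ R, ∃ i, z ∈ piece i := by
    intro z hz
    rw [hcover] at hz
    rcases hz with (hz | hz) | hz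
    · obtain ⟨w, hw⟩ := mem_iUnion.mp hz
      exact ⟨Sum.inl w, hw⟩
    · obtain ⟨b, hb⟩ := mem_iUnion.mp hz
      exact ⟨Sum.inr (Sum.inl b), hb⟩
    · obtain ⟨k, hk⟩ := hz
      exact ⟨Sum.inr (Sum.inr k), mem_singleton_iff.mpr hk.symm⟩
  have hconv : ∀ i, Convex ℝ (piece i) := by
    rintro (w | b | k)
    · exact (htconv w).interior
    · show Convex ℝ (segment ℝ (segEnd₁ b) (segEnd₂ b) \ {segEnd₁ b, segEnd₂ b})
      rw [segment_diff_endpoints (hsegnd b)]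
      exact convex_openSegment _ _
    · exact convex_singleton _
  have hJconv : ∀ i, Convex ℝ (J i) := by
    rintro (w | b | k)
    · exact ((htconv w).interior).linear_image (LinearMap.snd ℝ ℝ ℝ)
    · show Convex ℝ (if (segEnd₁ b).2 = (segEnd₂ b).2 then _ else _)
      split
      · exact convex_Icc _ _
      · exact convex_Ioo _ _
    · exact convex_Icc _ _
  have hJbdd : ∀ i, IsBounded (J i) := by
    rintro (w | b | k)
    · exact snd_bounded (hRbd.subset (hsub (Sum.inl w)))
    · show IsBounded (if (segEnd₁ b).2 = (segEnd₂ b).2 then _ else _)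
      split
      · exact Metric.isBounded_Icc _ _
      · exact Metric.isBounded_Ioo _ _
    · exact Metric.isBounded_Icc _ _
  have hpiece : ∀ i y, chi1 (sl (piece i) y) = c i * indZ (J i) y := by
    rintro (w | b | k) y
    · exact tile_slice (htconv w).interior isOpen_interior
        (hRbd.subset (hsub (Sum.inl w))) y
    · exact seg_piece_slice (hsegnd b) y
    · show chi1 (sl ({corner k} : Set (ℝ × ℝ)) y) = (1 : ℤ) * indZ (Icc (corner k).2 (corner k).2) y
      rw [one_mul]
      exact corner_slice (corner k) y
  have key := euler_sum R hRconv hRcomp hRne piece hconv hsub hdisj hcov c J hJconv hJbdd hpiece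
  rw [Fintype.sum_sum_type, Fintype.sum_sum_type] at key
  have hWsum : ∑ w : W, c (Sum.inl w) * chi1 (J (Sum.inl w)) = (Fintype.card W : ℤ) := by
    rw [Finset.sum_congr rfl (fun w _ => ?_), Finset.sum_const, Finset.card_univ, nsmul_eq_mul,
      mul_one]
    show c (Sum.inl w) * chi1 (J (Sum.inl w)) = 1
    have hchi : chi1 (Prod.snd '' interior (tile w)) = -1 := by
      have hcv : Convex ℝ (Prod.snd '' interior (tile w)) :=
        ((htconv w).interior).linear_image (LinearMap.snd ℝ ℝ ℝ)
      exact convex_open_chi1 hcv (isOpenMap_snd _ isOpen_interior)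
        (snd_bounded (hRbd.subset (hsub (Sum.inl w)))) ((htint w).image _)
    show (-1 : ℤ) * chi1 (Prod.snd '' interior (tile w)) = 1
    rw [hchi]
    ring
  have hBsum : ∑ b : B, c (Sum.inr (Sum.inl b)) * chi1 (J (Sum.inr (Sum.inl b))) =
      -(Fintype.card B : ℤ) := by
    rw [Finset.sum_congr rfl (fun b _ => ?_), Finset.sum_const, Finset.card_univ, nsmul_eq_mul,
      mul_neg, mul_one]
    show c (Sum.inr (Sum.inl b)) * chi1 (J (Sum.inr (Sum.inl b))) = -1
    show (if (segEnd₁ b).2 = (segEnd₂ b).2 then (-1 : ℤ) else 1) *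
      chi1 (if (segEnd₁ b).2 = (segEnd₂ b).2
          then Icc (segEnd₁ b).2 (segEnd₁ b).2
          else Ioo (min (segEnd₁ b).2 (segEnd₂ b).2) (max (segEnd₁ b).2 (segEnd₂ b).2)) = -1
    by_cases h2 : (segEnd₁ b).2 = (segEnd₂ b).2
    · rw [if_pos h2, if_pos h2, chi1_Icc le_rfl]
      ring
    · rw [if_neg h2, if_neg h2, chi1_Ioo (min_lt_max.mpr h2), one_mul]
  have hVsum : ∑ k : Fin n, c (Sum.inr (Sum.inr k)) * chi1 (J (Sum.inr (Sum.inr k))) =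
      (n : ℤ) := by
    rw [Finset.sum_congr rfl (fun k _ => ?_), Finset.sum_const, Finset.card_univ, nsmul_eq_mul,
      mul_one, Fintype.card_fin]
    show (1 : ℤ) * chi1 (Icc (corner k).2 (corner k).2) = 1
    rw [one_mul, chi1_Icc le_rfl]
  rw [hWsum, hBsum, hVsum] at key
  linarith
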